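/- Let f satisfy (H1) with F(r)=∫₀^r f(s) ds < 0 for 0 < r ≤ 1. Let c > 0 and v be a C² solution of v'' + c v' + f(v) = 0 on ℝ with 0 ≤ v ≤ 1, v → 0 at -∞, v → 1 at +∞. If ξ ∈ ℝ satisfies v'(ξ) = 0, then v(ξ) = 0 or v(ξ) = 1. -/

import Mathlib

open Filter Set intervalIntegral

theorem stmt_17 (f : ℝ → ℝ) (s₀ c : ℝ) (v : ℝ → ℝ) (ξ : ℝ)
    (hf : Continuous f) (hs₀ : 0 < s₀) (hs₀1 : s₀ < 1)
    (hf0 : f 0 = 0) (hfs₀ : f s₀ = 0) (hf1 : f 1 = 0)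
    (hneg : ∀ s, (s ∈ Ioo 0 s₀ ∨ s ∈ Ioi 1) → f s < 0)
    (hpos : ∀ s, (s ∈ Iio 0 ∨ s ∈ Ioo s₀ 1) → 0 < f s)
    (hF : ∀ r, 0 < r → r ≤ 1 → (∫ s in (0:ℝ)..r, f s) < 0)
    (hc : 0 < c)
    (hv : ContDiff ℝ 2 v)
    (hode : ∀ z, deriv (deriv v) z + c * deriv v z + f (v z) = 0)
    (h01 : ∀ z, 0 ≤ v z ∧ v z ≤ 1)
    (hbot : Tendsto v atBot (nhds 0)) (htop : Tendsto v atTop (nhds 1))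
    (hξ : deriv v ξ = 0) :
    v ξ = 0 ∨ v ξ = 1 := by
  by_contra hcon
  push_neg at hcon
  obtain ⟨ha0, ha1⟩ := hcon
  set a := v ξ with ha_def
  have ha01 : 0 < a ∧ a < 1 := by
    rcases h01 ξ with ⟨h1, h2⟩
    exact ⟨lt_of_le_of_ne h1 (Ne.symm ha0), lt_of_le_of_ne h2 ha1⟩
  -- regularity of v
  have hvd : Differentiable ℝ v := hv.differentiable (by norm_num)
  have hv2 : ContDiff ℝ ((1 : WithTop ℕ∞) + 1) v := by
    convert hv using 2
    norm_num
  have hv1 : ContDiff ℝ 1 (deriv v) := (contDiff_succ_iff_deriv.mp hv2).2.2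
  have hv'd : Differentiable ℝ (deriv v) := hv1.differentiable one_ne_zero
  have hv'c : Continuous (deriv v) := hv'd.continuous
  -- the primitive F
  set F : ℝ → ℝ := fun r => ∫ s in (0:ℝ)..r, f s with hF_def
  have hFd : ∀ r, HasDerivAt F (f r) r := fun r =>
    (hf.integral_hasStrictDerivAt 0 r).hasDerivAt
  have hFc : Continuous F := by
    have : Differentiable ℝ F := fun r => (hFd r).differentiableAt
    exact this.continuous
  have hFsub : ∀ p q : ℝ, F q - F p = ∫ s in p..q, f s := fun p q =>
    integral_interval_sub_left (hf.intervalIntegrable 0 q) (hf.intervalIntegrable 0 p)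
  -- the energy
  set E : ℝ → ℝ := fun z => (deriv v z) ^ 2 / 2 + F (v z) with hE_def
  have hE : ∀ z, HasDerivAt E (-(c * (deriv v z) ^ 2)) z := by
    intro z
    have h1 : HasDerivAt (fun z => (deriv v z) ^ 2 / 2)
        ((2 * deriv v z ^ 1 * deriv (deriv v) z) / 2) z :=
      (((hv'd z).hasDerivAt).pow 2).div_const 2
    have h2 : HasDerivAt (fun z => F (v z)) (f (v z) * deriv v z) z :=
      (hFd (v z)).comp z (hvd z).hasDerivAt
    have h3 := h1.add h2
    refine h3.congr_deriv (Eq.symm ?_)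
    have h := hode z
    linear_combination (- deriv v z) * h
  have hEd : Differentiable ℝ E := fun z => (hE z).differentiableAt
  have hEanti : Antitone E := by
    apply antitone_of_deriv_nonpos hEd
    intro z
    rw [(hE z).deriv]
    nlinarith [sq_nonneg (deriv v z), hc]
  have hEge : ∀ z, F (v z) ≤ E z := by
    intro z
    have : (0:ℝ) ≤ (deriv v z) ^ 2 / 2 := by positivity
    simp only [hE_def]; linarith
  have hlim : Tendsto (fun z => F (v z)) atTop (nhds (F 1)) :=
    (hFc.tendsto 1).comp htop
  have hkey : ∀ z₀, F 1 ≤ E z₀ := by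
    intro z₀
    refine le_of_tendsto hlim ?_
    filter_upwards [eventually_ge_atTop z₀] with z hz
    exact (hEge z).trans (hEanti hz)
  have hkey' : ∀ z₀, v z₀ ≠ 1 → F 1 < E z₀ := by
    intro z₀ hne
    rcases lt_or_eq_of_le (hkey z₀) with h | h
    · exact h
    exfalso
    have hconst : ∀ z, z₀ ≤ z → E z = F 1 :=
      fun z hz => le_antisymm (h ▸ hEanti hz) (hkey z)
    have hderiv0 : ∀ z ∈ interior (Ici z₀), deriv v z = 0 := by
      intro z hz
      rw [interior_Ici] at hz
      have hdE : deriv E z = 0 := by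
        have heq : E =ᶠ[nhds z] fun _ => F 1 := by
          filter_upwards [Ioi_mem_nhds hz] with y hy
          exact hconst y (le_of_lt hy)
        rw [heq.deriv_eq]
        simp
      rw [(hE z).deriv] at hdE
      have h2 : c * deriv v z ^ 2 = 0 := by linarith
      have h3 := (mul_eq_zero.mp h2).resolve_left hc.ne'
      exact (pow_eq_zero_iff two_ne_zero).mp h3
    have hmono : MonotoneOn v (Ici z₀) :=
      monotoneOn_of_deriv_nonneg (convex_Ici z₀) hvd.continuous.continuousOn
        (hvd.differentiableOn) (fun z hz => (hderiv0 z hz).ge)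
    have hanti : AntitoneOn v (Ici z₀) :=
      antitoneOn_of_deriv_nonpos (convex_Ici z₀) hvd.continuous.continuousOn
        (hvd.differentiableOn) (fun z hz => (hderiv0 z hz).le)
    have hvconst : ∀ z, z₀ ≤ z → v z = v z₀ := fun z hz =>
      le_antisymm (hanti self_mem_Ici hz hz) (hmono self_mem_Ici hz hz)
    have : Tendsto v atTop (nhds (v z₀)) := by
      apply Tendsto.congr' _ (tendsto_const_nhds (α := ℝ))
      filter_upwards [eventually_ge_atTop z₀] with z hz
      exact (hvconst z hz).symm
    exact hne (tendsto_nhds_unique htop this).symm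
  -- E ξ = F a
  have hEξ : E ξ = F a := by simp [hE_def, hξ, ha_def]
  have hFa : F 1 < F a := hEξ ▸ hkey' ξ ha1
  -- Case a ≥ s₀ : direct contradiction
  rcases le_or_gt s₀ a with hcase | hcase
  · have hint : 0 < ∫ s in a..(1:ℝ), f s := by
      apply intervalIntegral_pos_of_pos_on (hf.intervalIntegrable a 1) _ ha01.2
      intro x hx
      exact hpos x (Or.inr ⟨lt_of_le_of_lt hcase hx.1, hx.2⟩)
    have := hFsub a 1
    linarith
  -- Case a < s₀ : find an interior local max η to the left of ξ
  · have hfa : f a < 0 := hneg a (Or.inl ⟨ha01.1, hcase⟩)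
    have hv''ξ : deriv (deriv v) ξ = -f a := by
      have := hode ξ; rw [hξ] at this; linarith
    -- deriv v < 0 just to the left of ξ
    have hslope : ∀ᶠ z in nhdsWithin ξ (Iio ξ), deriv v z < 0 := by
      have hd : HasDerivAt (deriv v) (deriv (deriv v) ξ) ξ := (hv'd ξ).hasDerivAt
      have hpos'' : 0 < deriv (deriv v) ξ := by rw [hv''ξ]; linarith
      have hts : Tendsto (fun z => (deriv v z - deriv v ξ) / (z - ξ))
          (nhdsWithin ξ {ξ}ᶜ) (nhds (deriv (deriv v) ξ)) := by
        have := hd.hasDerivWithinAt (s := {ξ}ᶜ)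
        rw [hasDerivWithinAt_iff_tendsto_slope] at this
        simpa [slope_def_field, slope_fun_def_field, div_eq_inv_mul] using this
      have hts' : Tendsto (fun z => (deriv v z - deriv v ξ) / (z - ξ))
          (nhdsWithin ξ (Iio ξ)) (nhds (deriv (deriv v) ξ)) :=
        hts.mono_left (nhdsWithin_mono ξ (fun z hz => by
          simp only [mem_compl_iff, mem_singleton_iff]
          exact ne_of_lt hz))
      have hev : ∀ᶠ z in nhdsWithin ξ (Iio ξ),
          0 < (deriv v z - deriv v ξ) / (z - ξ) :=
        hts' (Ioi_mem_nhds hpos'')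
      filter_upwards [hev, self_mem_nhdsWithin] with z hz hz'
      rw [mem_Iio] at hz'
      have hzξ : z - ξ < 0 := by linarith
      rw [hξ, sub_zero] at hz
      by_contra hge
      push_neg at hge
      have : (deriv v z) / (z - ξ) ≤ 0 := div_nonpos_of_nonneg_of_nonpos hge hzξ.le
      linarith
    -- extract an interval (l, ξ) where deriv v < 0
    obtain ⟨l, hlξ, hl⟩ : ∃ l < ξ, ∀ z ∈ Ioo l ξ, deriv v z < 0 := by
      rw [eventually_nhdsWithin_iff] at hslope
      rcases Metric.eventually_nhds_iff.mp hslope with ⟨ε, hε, hball⟩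
      refine ⟨ξ - ε, by linarith, fun z hz => ?_⟩
      apply hball _ hz.2
      rw [Real.dist_eq, abs_lt]
      constructor <;> [linarith [hz.1]; linarith [hz.2]]
    -- find R with v < a on (-∞, R]
    obtain ⟨R₀, hR₀⟩ : ∃ R₀, ∀ z ≤ R₀, v z < a := by
      have : ∀ᶠ z in atBot, v z < a := hbot.eventually_lt_const ha01.1
      exact eventually_atBot.mp this
    set R : ℝ := min R₀ (min l (ξ - 1)) with hR_def
    have hRξ : R < ξ := lt_of_le_of_lt (le_trans (min_le_right _ _) (min_le_right _ _))
      (by linarith)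
    have hRl : R ≤ l := le_trans (min_le_right _ _) (min_le_left _ _)
    have hRR₀ : R ≤ R₀ := min_le_left _ _
    -- a point z₁ in (R, ξ) with v z₁ > a
    set z₁ : ℝ := (max l R + ξ) / 2 with hz₁_def
    have hmlt : max l R < ξ := max_lt hlξ hRξ
    have hz₁mem : max l R < z₁ ∧ z₁ < ξ := by
      constructor <;> (simp only [hz₁_def]; linarith)
    have hanti : StrictAntiOn v (Icc z₁ ξ) := by
      apply strictAntiOn_of_deriv_neg (convex_Icc z₁ ξ) hvd.continuous.continuousOn
      intro z hz
      rw [interior_Icc] at hz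
      exact hl z ⟨lt_of_le_of_lt (le_max_left l R) (lt_trans hz₁mem.1 hz.1), hz.2⟩
    have hz₁gt : a < v z₁ := by
      have := hanti (left_mem_Icc.mpr hz₁mem.2.le) (right_mem_Icc.mpr hz₁mem.2.le) hz₁mem.2
      simpa [ha_def] using this
    -- maximum of v on [R, ξ]
    obtain ⟨η, hηmem, hηmax⟩ := isCompact_Icc.exists_isMaxOn (nonempty_Icc.mpr hRξ.le)
      hvd.continuous.continuousOn (s := Icc R ξ)
    have hη_val : a < v η := lt_of_lt_of_le hz₁gt
      (hηmax ⟨le_trans (le_max_right l R) hz₁mem.1.le, hz₁mem.2.le⟩)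
    have hηR : R < η := by
      rcases lt_or_eq_of_le hηmem.1 with h | h
      · exact h
      · exact absurd (hR₀ η (h ▸ hRR₀)) (by linarith)
    have hηξ : η < ξ := by
      rcases lt_or_eq_of_le hηmem.2 with h | h
      · exact h
      · rw [h] at hη_val; exact absurd hη_val (lt_irrefl a)
    have hlocmax : IsLocalMax v η := by
      filter_upwards [Ioo_mem_nhds hηR hηξ] with z hz
      exact hηmax ⟨hz.1.le, hz.2.le⟩
    have hη' : deriv v η = 0 := hlocmax.deriv_eq_zero
    set b := v η with hb_def
    have hb1 : b ≤ 1 := (h01 η).2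
    have hEη : E η = F b := by simp [hE_def, hη', hb_def]
    have hFab : F a ≤ F b := by
      have := hEanti hηξ.le
      rw [hEη, hEξ] at this
      exact this
    rcases lt_or_eq_of_le hb1 with hb1' | hb1'
    · rcases le_or_gt b s₀ with hbs | hbs
      · -- b ∈ (a, s₀] : F b < F a, contradiction
        have hint : 0 < ∫ s in a..b, -f s := by
          apply intervalIntegral_pos_of_pos_on ((hf.neg).intervalIntegrable a b) _ hη_val
          intro x hx
          exact neg_pos.mpr (hneg x (Or.inl ⟨lt_trans ha01.1 hx.1, lt_of_lt_of_le hx.2 hbs⟩))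
        rw [intervalIntegral.integral_neg] at hint
        have := hFsub a b
        linarith
      · -- b ∈ (s₀, 1) : F 1 < F b but also F b < F 1
        have hFb : F 1 < F b := hEη ▸ hkey' η (by rw [← hb_def]; exact ne_of_lt hb1')
        have hint : 0 < ∫ s in b..(1:ℝ), f s := by
          apply intervalIntegral_pos_of_pos_on (hf.intervalIntegrable b 1) _ hb1'
          intro x hx
          exact hpos x (Or.inr ⟨lt_trans hbs hx.1, hx.2⟩)
        have := hFsub b 1
        linarith
    · -- b = 1 : E η = F 1 ≥ E ξ > F 1
      rw [hb1'] at hEη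
      have := hEanti hηξ.le
      rw [hEη, hEξ] at this
      linarith
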